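/- Let f:ℝ→ℝ be locally Lipschitz with xf(x)>0 for x≠0, f(0)=0, liminf_{x→+∞}|f(x)|>0 and liminf_{x→-∞}|f(x)|>0. Let g be continuous with lim_{t→∞}∫_0^t g(s)ds existing and finite. Then the unique continuous solution x of x'(t)=-f(x(t))+g(t), x(0)=ξ, satisfies x(t)→0 as t→∞. -/

import Mathlib

open Real Filter MeasureTheory Set Topology

/-- Auxiliary lemma: under one-sided sign conditions, eventually `x t ≤ 2 ε`. -/
lemma stmt10_aux (f g x : ℝ → ℝ)
    (hf : Continuous f) (hf0 : f 0 = 0) (hsign : ∀ y > 0, 0 < f y)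
    (hg : Continuous g) (L : ℝ)
    (hgint : Tendsto (fun t => ∫ s in (0:ℝ)..t, g s) atTop (𝓝 L))
    (hx : ∀ t ≥ 0, HasDerivAt x (-f (x t) + g t) t)
    (ε : ℝ) (hε : 0 < ε) :
    ∀ᶠ t in atTop, x t ≤ 2 * ε := by
  set G : ℝ → ℝ := fun t => ∫ s in (0:ℝ)..t, g s with hGdef
  have hGc : Continuous G :=
    intervalIntegral.continuous_primitive (fun a b => hg.intervalIntegrable a b) 0
  have hxc : ∀ t, 0 ≤ t → ContinuousAt x t := fun t ht => (hx t ht).continuousAt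
  -- key integral inequality
  have key2 : ∀ (m s t : ℝ), 0 ≤ s → s ≤ t → (∀ u ∈ Icc s t, m ≤ f (x u)) →
      x t ≤ x s - m * (t - s) + (G t - G s) := by
    intro m s t hs hst hm
    have hcx : ContinuousOn x (Icc s t) := fun u hu =>
      (hxc u (hs.trans hu.1)).continuousWithinAt
    have hcfx : ContinuousOn (fun u => f (x u)) (Icc s t) := hf.comp_continuousOn hcx
    have hderiv : ∀ u ∈ uIcc s t, HasDerivAt x (-f (x u) + g u) u := by
      rw [uIcc_of_le hst]; exact fun u hu => hx u (hs.trans hu.1)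
    have hint1 : IntervalIntegrable (fun u => f (x u)) volume s t := by
      apply ContinuousOn.intervalIntegrable
      rwa [uIcc_of_le hst]
    have hint : IntervalIntegrable (fun u => -f (x u) + g u) volume s t := by
      apply ContinuousOn.intervalIntegrable
      rw [uIcc_of_le hst]
      exact hcfx.neg.add hg.continuousOn
    have hFTC : ∫ u in s..t, (-f (x u) + g u) = x t - x s :=
      intervalIntegral.integral_eq_sub_of_hasDerivAt hderiv hint
    have hGdiff : ∫ u in s..t, g u = G t - G s :=
      (intervalIntegral.integral_interval_sub_left (hg.intervalIntegrable 0 t)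
        (hg.intervalIntegrable 0 s)).symm
    have hsplit : ∫ u in s..t, (-f (x u) + g u)
        = (∫ u in s..t, g u) - ∫ u in s..t, f (x u) := by
      have hfe : (fun u => -f (x u) + g u) = fun u => g u - f (x u) := by
        funext u; ring
      rw [hfe]
      exact intervalIntegral.integral_sub (hg.intervalIntegrable s t) hint1
    have hlow : m * (t - s) ≤ ∫ u in s..t, f (x u) := by
      have hconst : ∫ u in s..t, m = (t - s) * m := by
        simp [intervalIntegral.integral_const, smul_eq_mul]
      have := intervalIntegral.integral_mono_on hst intervalIntegrable_const hint1 hm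
      rw [hconst] at this
      linarith [this]
    have := hFTC
    rw [hsplit, hGdiff] at this
    linarith
  -- sup-crossing lemma
  have hsup : ∀ (a t c : ℝ), 0 ≤ a → a ≤ t → x a ≤ c → c < x t →
      ∃ s, a ≤ s ∧ s < t ∧ x s = c ∧ ∀ u, s < u → u ≤ t → c < x u := by
    intro a t c ha hat hxa hxt
    set S := {u | u ∈ Icc a t ∧ x u ≤ c} with hSdef
    have hSne : S.Nonempty := ⟨a, ⟨le_rfl, hat⟩, hxa⟩
    have hSsub : S ⊆ Icc a t := fun u hu => hu.1
    have hSbdd : BddAbove S := BddAbove.mono hSsub bddAbove_Icc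
    have hScl : IsClosed S := by
      have hcx : ContinuousOn x (Icc a t) := fun u hu =>
        (hxc u (ha.trans hu.1)).continuousWithinAt
      have : S = Icc a t ∩ x ⁻¹' (Iic c) := by
        ext u; simp [hSdef, and_comm]
      rw [this]
      exact hcx.preimage_isClosed_of_isClosed isClosed_Icc isClosed_Iic
    set s := sSup S with hsdef
    have hsS : s ∈ S := hScl.csSup_mem hSne hSbdd
    have hsa : a ≤ s := le_csSup hSbdd ⟨⟨le_rfl, hat⟩, hxa⟩
    have hst : s < t := by
      rcases lt_or_eq_of_le hsS.1.2 with h | h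
      · exact h
      · exfalso; rw [h] at hsS; linarith [hsS.2]
    have hgt : ∀ u, s < u → u ≤ t → c < x u := by
      intro u h1 h2
      by_contra hcon
      push_neg at hcon
      have : u ∈ S := ⟨⟨hsa.trans h1.le |>.trans (le_refl u) |> fun _ => (ha.trans hsa).trans h1.le |> fun _ => le_of_lt (lt_of_le_of_lt hsa h1), h2⟩, hcon⟩
      exact absurd (le_csSup hSbdd this) (not_le.mpr h1)
    have hxs : x s = c := by
      refine le_antisymm hsS.2 ?_
      by_contra hcon
      push_neg at hcon
      have hcs : ContinuousAt x s := hxc s (ha.trans hsa)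
      have hnb : x ⁻¹' (Iio c) ∈ 𝓝 s := hcs.preimage_mem_nhds (Iio_mem_nhds hcon)
      obtain ⟨δ, hδ, hball⟩ := Metric.mem_nhds_iff.mp hnb
      set u := min (s + δ / 2) t with hudef
      have hu1 : s < u := lt_min (by linarith) hst
      have hu2 : u ≤ t := min_le_right _ _
      have hu3 : u ∈ Metric.ball s δ := by
        rw [Metric.mem_ball, Real.dist_eq, abs_of_nonneg (by linarith)]
        have : u ≤ s + δ / 2 := min_le_left _ _
        linarith
      have := hball hu3
      simp only [mem_preimage, mem_Iio] at this
      exact absurd this (not_lt.mpr (hgt u hu1 hu2).le)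
    exact ⟨s, hsa, hst, hxs, hgt⟩
  -- bound on G
  obtain ⟨T0, hT0⟩ := Metric.tendsto_atTop.mp hgint 1 one_pos
  set T0' := max T0 0 with hT0'def
  obtain ⟨C1, hC1⟩ := isCompact_Icc.exists_bound_of_continuousOn
    (s := Icc (0:ℝ) T0') hGc.continuousOn
  set C := max C1 (|L| + 1) with hCdef
  have hC : ∀ t, 0 ≤ t → |G t| ≤ C := by
    intro t ht
    rcases le_or_gt t T0' with h | h
    · exact le_trans (by simpa using hC1 t ⟨ht, h⟩) (le_max_left _ _)
    · have h1 : T0 ≤ t := le_trans (le_max_left _ _) h.le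
      have := hT0 t h1
      rw [Real.dist_eq] at this
      have : |G t| ≤ |L| + 1 := by
        have := abs_sub_abs_le_abs_sub (G t) L
        linarith
      exact le_trans this (le_max_right _ _)
  have hC0 : 0 ≤ C := le_trans (abs_nonneg _) (hC 0 le_rfl)
  -- bound on x
  set B := max (x 0) 0 + 2 * C with hBdef
  have hB0 : 0 ≤ B := by positivity
  have hG0 : G 0 = 0 := intervalIntegral.integral_same
  have hbd : ∀ t, 0 ≤ t → x t ≤ B := by
    intro t ht
    rcases le_or_gt (x t) 0 with h | h
    · linarith
    by_cases hall : ∀ u ∈ Icc 0 t, 0 < x u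
    · have hk := key2 0 0 t le_rfl ht (fun u hu => (hsign _ (hall u hu)).le)
      have h1 := abs_le.mp (hC t ht)
      rw [hG0] at hk
      simp only [zero_mul, sub_zero] at hk
      linarith [le_max_left (x 0) 0, hBdef]
    · push_neg at hall
      obtain ⟨u0, hu0mem, hu0⟩ := hall
      obtain ⟨s, hs1, hs2, hs3, hs4⟩ := hsup u0 t 0 hu0mem.1 hu0mem.2 hu0 h
      have hs0 : 0 ≤ s := hu0mem.1.trans hs1
      have hfx : ∀ u ∈ Icc s t, 0 ≤ f (x u) := by
        intro u hu
        rcases eq_or_lt_of_le hu.1 with rfl | hlt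
        · rw [hs3, hf0]
        · exact (hsign _ (hs4 u hlt hu.2)).le
      have hk := key2 0 s t hs0 hs2.le hfx
      have h1 := abs_le.mp (hC t ht)
      have h2 := abs_le.mp (hC s hs0)
      rw [hs3] at hk
      simp only [zero_mul, sub_zero] at hk
      have h3 : (0:ℝ) ≤ max (x 0) 0 := le_max_right _ _
      linarith [hBdef]
  -- main argument
  rcases lt_or_ge B ε with hBε | hBε
  · filter_upwards [eventually_ge_atTop (0:ℝ)] with t ht
    linarith [hbd t ht]
  -- minimum of f on [ε, B]
  obtain ⟨y0, hy0mem, hy0min⟩ := isCompact_Icc.exists_isMinOn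
    (nonempty_Icc.mpr hBε) (hf.continuousOn (s := Icc ε B))
  set m := f y0 with hmdef
  have hm0 : 0 < m := hsign y0 (lt_of_lt_of_le hε hy0mem.1)
  have hmle : ∀ y ∈ Icc ε B, m ≤ f y := fun y hy => hy0min hy
  -- Cauchy bound on G with ε
  obtain ⟨T1, hT1⟩ := Metric.tendsto_atTop.mp hgint (ε / 2) (by linarith)
  set T := max T1 0 with hTdef
  have hT0le : (0:ℝ) ≤ T := le_max_right _ _
  have hGT : ∀ u v, T ≤ u → T ≤ v → |G u - G v| ≤ ε := by
    intro u v hu hv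
    have h1 := hT1 u (le_trans (le_max_left _ _) hu)
    have h2 := hT1 v (le_trans (le_max_left _ _) hv)
    rw [Real.dist_eq] at h1 h2
    have h3 := abs_sub_le (G u) L (G v)
    rw [abs_sub_comm L (G v)] at h3
    linarith
  -- dip: ∃ t1 ≥ T with x t1 ≤ ε
  have hdip : ∃ t1, T ≤ t1 ∧ x t1 ≤ ε := by
    by_contra hcon
    push_neg at hcon
    set t := T + (B + ε) / m with htdef
    have hTt : T ≤ t := by
      have h0 : 0 ≤ (B + ε) / m := by positivity
      rw [htdef]
      linarith
    have hmem : ∀ u ∈ Icc T t, m ≤ f (x u) := by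
      intro u hu
      have h1 : ε < x u := hcon u hu.1
      have h2 : x u ≤ B := hbd u (hT0le.trans hu.1)
      exact hmle _ ⟨h1.le, h2⟩
    have hk := key2 m T t hT0le hTt hmem
    have hGb := hGT t T (by linarith) le_rfl
    have habs := abs_le.mp hGb
    have hms : m * (t - T) = B + ε := by
      rw [htdef]
      field_simp
      ring
    have hxt : ε < x t := hcon t hTt
    have hxT : x T ≤ B := hbd T hT0le
    rw [hms] at hk
    linarith
  obtain ⟨t1, ht1T, ht1⟩ := hdip
  have ht10 : 0 ≤ t1 := hT0le.trans ht1T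
  -- final: for t ≥ t1, x t ≤ 2 ε
  filter_upwards [eventually_ge_atTop t1] with t htt1
  rcases le_or_gt (x t) ε with h | h
  · linarith
  obtain ⟨s, hs1, hs2, hs3, hs4⟩ := hsup t1 t ε ht10 htt1 ht1 h
  have hs0 : 0 ≤ s := ht10.trans hs1
  have hfx : ∀ u ∈ Icc s t, 0 ≤ f (x u) := by
    intro u hu
    rcases eq_or_lt_of_le hu.1 with rfl | hlt
    · rw [hs3]; exact (hsign _ hε).le
    · exact (hsign _ (hε.trans (hs4 u hlt hu.2))).le
  have hk := key2 0 s t hs0 hs2.le hfx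
  have hGb := abs_le.mp (hGT t s (ht1T.trans (htt1)) (ht1T.trans hs1))
  rw [hs3] at hk
  simp only [zero_mul, sub_zero] at hk
  linarith

theorem stmt10 (f g x : ℝ → ℝ) (ξ L : ℝ)
    (hlip : LocallyLipschitz f) (hsign : ∀ y ≠ 0, 0 < y * f y) (hf0 : f 0 = 0)
    (hpinf : ∃ c > 0, ∀ᶠ y in atTop, c ≤ |f y|)
    (hminf : ∃ c > 0, ∀ᶠ y in atBot, c ≤ |f y|)
    (hg : Continuous g)
    (hgint : Tendsto (fun t => ∫ s in (0:ℝ)..t, g s) atTop (𝓝 L))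
    (hx : ∀ t ≥ 0, HasDerivAt x (-f (x t) + g t) t)
    (hx0 : x 0 = ξ) :
    Tendsto x atTop (𝓝 0) := by
  have hf : Continuous f := hlip.continuous
  have hsign1 : ∀ y > 0, 0 < f y := by
    intro y hy
    have := hsign y (ne_of_gt hy)
    nlinarith
  have hsign2 : ∀ y > 0, 0 < -f (-y) := by
    intro y hy
    have := hsign (-y) (by linarith)
    nlinarith
  rw [Metric.tendsto_atTop]
  intro ε hε
  have h1 := stmt10_aux f g x hf hf0 hsign1 hg L hgint hx (ε / 4) (by linarith)
  have h2 : ∀ᶠ t in atTop, -x t ≤ 2 * (ε / 4) := by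
    apply stmt10_aux (fun y => -f (-y)) (fun t => -g t) (fun t => -x t)
      ((hf.comp continuous_neg).neg) (by simp [hf0]) hsign2 hg.neg (-L)
    · have : (fun t => ∫ s in (0:ℝ)..t, -g s) = fun t => -∫ s in (0:ℝ)..t, g s := by
        funext t; rw [intervalIntegral.integral_neg]
      rw [this]
      exact hgint.neg
    · intro t ht
      have := (hx t ht).neg
      exact this.congr_deriv (by simp only [neg_neg]; ring)
    · linarith
  obtain ⟨N, hN⟩ := eventually_atTop.mp (h1.and h2)
  refine ⟨N, fun t ht => ?_⟩
  obtain ⟨ha, hb⟩ := hN t ht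
  rw [Real.dist_eq, sub_zero, abs_lt]
  constructor <;> linarith
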